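/- Let φ ∈ ℝ and let (a₁,b₁), (a₂,b₂) ∈ ℤ² be distinct lattice points with r_φ(a₁,b₁) = r_φ(a₂,b₂). Then (a₁ − a₂)² + (b₁ − b₂)² = 1; in particular, either a₁ = a₂ and b₁ − b₂ = ±1, or b₁ = b₂ and a₁ − a₂ = ±1. -/

import Mathlib

/-- The discretized rotation `r_φ : ℤ² → ℤ²`. -/
noncomputable def rphi (φ : ℝ) (p : ℤ × ℤ) : ℤ × ℤ :=
  (⌊(p.1 : ℝ) * Real.cos φ - (p.2 : ℝ) * Real.sin φ⌋,
   ⌊(p.1 : ℝ) * Real.sin φ + (p.2 : ℝ) * Real.cos φ⌋)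

lemma abs_sub_lt_one_of_floor_eq {x y : ℝ} (h : ⌊x⌋ = ⌊y⌋) : |x - y| < 1 := by
  have hx1 := Int.lt_floor_add_one x
  have hx2 := Int.floor_le x
  have hy1 := Int.lt_floor_add_one y
  have hy2 := Int.floor_le y
  rw [abs_sub_lt_iff]
  constructor <;> [skip; skip] <;> rw [h] at * <;> linarith

theorem same_image_neighbours (φ : ℝ) (a₁ b₁ a₂ b₂ : ℤ)
    (hne : (a₁, b₁) ≠ (a₂, b₂)) (h : rphi φ (a₁, b₁) = rphi φ (a₂, b₂)) :
    (a₁ - a₂) ^ 2 + (b₁ - b₂) ^ 2 = 1 ∧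
      ((a₁ = a₂ ∧ (b₁ - b₂ = 1 ∨ b₁ - b₂ = -1)) ∨
        (b₁ = b₂ ∧ (a₁ - a₂ = 1 ∨ a₁ - a₂ = -1))) := by
  simp only [rphi, Prod.mk.injEq] at h
  obtain ⟨h1, h2⟩ := h
  have e1 := abs_sub_lt_one_of_floor_eq h1
  have e2 := abs_sub_lt_one_of_floor_eq h2
  set u := a₁ - a₂ with hu
  set v := b₁ - b₂ with hv
  have key : (u : ℝ) ^ 2 + (v : ℝ) ^ 2 < 2 := by
    have pyth := Real.sin_sq_add_cos_sq φ
    have h1' : |(u : ℝ) * Real.cos φ - (v : ℝ) * Real.sin φ| < 1 := by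
      have : ((u : ℤ) : ℝ) * Real.cos φ - ((v : ℤ) : ℝ) * Real.sin φ =
          ((a₁ : ℝ) * Real.cos φ - (b₁ : ℝ) * Real.sin φ) -
          ((a₂ : ℝ) * Real.cos φ - (b₂ : ℝ) * Real.sin φ) := by
        push_cast [hu, hv]; ring
      rw [this]; exact e1
    have h2' : |(u : ℝ) * Real.sin φ + (v : ℝ) * Real.cos φ| < 1 := by
      have : ((u : ℤ) : ℝ) * Real.sin φ + ((v : ℤ) : ℝ) * Real.cos φ =
          ((a₁ : ℝ) * Real.sin φ + (b₁ : ℝ) * Real.cos φ) -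
          ((a₂ : ℝ) * Real.sin φ + (b₂ : ℝ) * Real.cos φ) := by
        push_cast [hu, hv]; ring
      rw [this]; exact e2
    have s1 : ((u : ℝ) * Real.cos φ - (v : ℝ) * Real.sin φ) ^ 2 < 1 := by
      have := (sq_lt_one_iff_abs_lt_one _).mpr h1'
      simpa using this
    have s2 : ((u : ℝ) * Real.sin φ + (v : ℝ) * Real.cos φ) ^ 2 < 1 := by
      have := (sq_lt_one_iff_abs_lt_one _).mpr h2'
      simpa using this
    nlinarith [s1, s2, pyth]
  have keyZ : u ^ 2 + v ^ 2 < 2 := by exact_mod_cast (by push_cast; linarith : ((u ^ 2 + v ^ 2 : ℤ) : ℝ) < 2)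
  have hne' : u ≠ 0 ∨ v ≠ 0 := by
    by_contra hc
    push_neg at hc
    apply hne
    have : a₁ = a₂ ∧ b₁ = b₂ := by omega
    simp [this.1, this.2]
  have hu2 : u ^ 2 ≤ 1 := by nlinarith [sq_nonneg v]
  have hv2 : v ^ 2 ≤ 1 := by nlinarith [sq_nonneg u]
  have hul : -1 ≤ u := by nlinarith [sq_nonneg (u + 1)]
  have huu : u ≤ 1 := by nlinarith [sq_nonneg (u - 1)]
  have hvl : -1 ≤ v := by nlinarith [sq_nonneg (v + 1)]
  have hvu : v ≤ 1 := by nlinarith [sq_nonneg (v - 1)]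
  interval_cases u <;> interval_cases v <;> norm_num at * <;> omega
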